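/- Let V be a finite-dimensional real vector space equipped with a symmetric bilinear form B of signature (1, n) (exactly one positive square in a diagonalization). If x, y ∈ V satisfy B(x,x) > 0 and B(y,y) > 0, then B(x,y)^2 ≥ B(x,x) · B(y,y) (the reverse Cauchy–Schwarz inequality for Lorentzian forms). -/

import Mathlib

/-- Reverse Cauchy–Schwarz inequality for a symmetric bilinear form of
signature `(1, n)` on a finite-dimensional real vector space: if
`B x x > 0` and `B y y > 0`, then `B x y ^ 2 ≥ B x x * B y y`. -/
theorem lorentz_reverse_cauchy_schwarz {V : Type*} [AddCommGroup V] [Module ℝ V]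
    (n : ℕ) (B : LinearMap.BilinForm ℝ V)
    (b : Module.Basis (Fin (n + 1)) ℝ V)
    (hb : ∀ i j, B (b i) (b j) =
      if i = j then (if i = (0 : Fin (n + 1)) then 1 else -1) else 0)
    (x y : V) (hx : 0 < B x x) (hy : 0 < B y y) :
    B x x * B y y ≤ (B x y) ^ 2 := by
  have key : ∀ u v : V, B u v =
      b.repr u 0 * b.repr v 0 -
        ∑ i ∈ Finset.univ.erase (0 : Fin (n+1)), b.repr u i * b.repr v i := by
    intro u v
    nth_rewrite 1 [← b.sum_repr u, ← b.sum_repr v]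
    simp only [map_sum, map_smul, LinearMap.sum_apply, LinearMap.smul_apply, hb,
      smul_eq_mul, mul_ite, mul_one, mul_neg, mul_zero, Finset.sum_ite_eq',
      Finset.mem_univ, if_true]
    rw [← Finset.sum_erase_add _ _ (Finset.mem_univ (0 : Fin (n+1)))]
    rw [if_pos rfl,
      Finset.sum_congr rfl (fun i hi => if_neg (Finset.mem_erase.mp hi).1)]
    rw [Finset.sum_neg_distrib]
    have h2 : ∑ i ∈ Finset.univ.erase (0 : Fin (n+1)), b.repr v i * b.repr u i
        = ∑ i ∈ Finset.univ.erase (0 : Fin (n+1)), b.repr u i * b.repr v i :=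
      Finset.sum_congr rfl (fun i _ => mul_comm _ _)
    rw [h2]; ring
  rw [key x x] at hx
  rw [key y y] at hy
  rw [key x y, key x x, key y y]
  set s := Finset.univ.erase (0 : Fin (n+1)) with hs
  set a := b.repr x 0 with ha
  set c := b.repr y 0 with hc
  set p := ∑ i ∈ s, b.repr x i * b.repr x i with hp
  set q := ∑ i ∈ s, b.repr y i * b.repr y i with hq
  set r := ∑ i ∈ s, b.repr x i * b.repr y i with hr
  have hp0 : 0 ≤ p := Finset.sum_nonneg fun i _ => mul_self_nonneg _
  have hK : 0 ≤ c ^ 2 * p - 2 * a * c * r + a ^ 2 * q := by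
    have hsum : ∑ i ∈ s, (c * b.repr x i - a * b.repr y i) ^ 2
        = c ^ 2 * p - 2 * a * c * r + a ^ 2 * q := by
      simp only [hp, hq, hr, Finset.mul_sum, ← Finset.sum_add_distrib,
        ← Finset.sum_sub_distrib]
      exact Finset.sum_congr rfl fun i _ => by ring
    rw [← hsum]
    exact Finset.sum_nonneg fun i _ => sq_nonneg _
  have ha2 : 0 < a * a := lt_of_le_of_lt hp0 (by linarith)
  nlinarith [sq_nonneg (c * p - a * r), mul_nonneg hx.le hK, ha2]
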